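/- In a synchronous system, the Elga probability and the extended HT probability coincide at every point: for every point (r,m) with Pr(ℛ(K(r,m))) > 0 and every point (r',m') ∈ K(r,m), Pr^Elga_{(r,m)}({(r',m')}) = Pr({r'}) / (Pr(ℛ(K(r,m))) · n_{(r,m)}(r')), and in fact n_{(r,m)}(r') = 1 for every run r' ∈ ℛ(K(r,m)). -/
import Mathlib


open scoped Classical

namespace SBP

variable {L : Type*}

/-- A point: a run together with a time. -/
abbrev Point (L : Type*) := (ℕ → L) × ℕ

/-- The information set `K(r,m)`: all points `(r',m')` with `r' ∈ ℛ` and `r' m' = r m`. -/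
def K (ℛ : Finset (ℕ → L)) (r : ℕ → L) (m : ℕ) : Set (Point L) :=
  {p | p.1 ∈ ℛ ∧ p.1 p.2 = r m}

/-- `ℛ(U)`: the runs of `ℛ` passing through some point of `U`. -/
noncomputable def runsOf (ℛ : Finset (ℕ → L)) (U : Set (Point L)) : Finset (ℕ → L) :=
  ℛ.filter fun r' => ∃ m', (r', m') ∈ U

/-- A system is synchronous if indistinguishable points occur at the same time. -/
def Synchronous (ℛ : Finset (ℕ → L)) : Prop :=
  ∀ r ∈ ℛ, ∀ r' ∈ ℛ, ∀ m m' : ℕ, r m = r' m' → m = m'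

/-- The local-state sequence of run `r` at time `m`:
`r 0, r 1, …, r m` with consecutive repetitions removed. -/
noncomputable def lseq (r : ℕ → L) (m : ℕ) : List L :=
  ((List.range (m + 1)).map r).destutter (· ≠ ·)

/-- Perfect recall: indistinguishable points have the same local-state sequence. -/
def PerfectRecall (ℛ : Finset (ℕ → L)) : Prop :=
  ∀ r ∈ ℛ, ∀ r' ∈ ℛ, ∀ m m' : ℕ, r m = r' m' → lseq r m = lseq r' m'

/-- A run-based event: contains all points of a run or none of them. -/
def RunBased (U : Set (Point L)) : Prop :=
  ∀ (r' : ℕ → L) (k k' : ℕ), (r', k) ∈ U → (r', k') ∈ U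

/-- The probability of a (finite) set of runs. -/
noncomputable def PrS (pr : (ℕ → L) → ℝ) (S : Finset (ℕ → L)) : ℝ := ∑ r ∈ S, pr r

/-- `n_{(r,m)}(r')`: the number of points of the information set `K(r,m)` lying on run `r'`. -/
noncomputable def npts (r : ℕ → L) (m : ℕ) (r' : ℕ → L) : ℕ :=
  Nat.card {k : ℕ | r' k = r m}

/-- The Elga probability of a single point, for the agent at the point `(r,m)`. -/
noncomputable def elga (ℛ : Finset (ℕ → L)) (pr : (ℕ → L) → ℝ) (r : ℕ → L) (m : ℕ)
    (p : Point L) : ℝ :=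
  if p ∈ K ℛ r m then
    pr p.1 / ∑ r'' ∈ runsOf ℛ (K ℛ r m), pr r'' * (npts r m r'' : ℝ)
  else 0

/-- In a synchronous system the Elga probability and the extended HT probability
coincide at every point; moreover `n_{(r,m)}(r') = 1` for every run through `K(r,m)`. -/
theorem elga_eq_htExt_of_synchronous (ℛ : Finset (ℕ → L)) (hne : ℛ.Nonempty)
    (hsync : Synchronous ℛ)
    (pr : (ℕ → L) → ℝ) (hnn : ∀ r' ∈ ℛ, 0 ≤ pr r') (hsum : ∑ r' ∈ ℛ, pr r' = 1)
    (hfin : ∀ r' ∈ ℛ, ∀ s ∈ ℛ, ∀ m : ℕ, {k : ℕ | r' k = s m}.Finite)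
    (r : ℕ → L) (hr : r ∈ ℛ) (m : ℕ)
    (hpos : 0 < PrS pr (runsOf ℛ (K ℛ r m))) :
    (∀ p ∈ K ℛ r m,
        elga ℛ pr r m p =
          pr p.1 / (PrS pr (runsOf ℛ (K ℛ r m)) * (npts r m p.1 : ℝ))) ∧
    (∀ r' ∈ runsOf ℛ (K ℛ r m), npts r m r' = 1) := by
  have hone : ∀ r' ∈ runsOf ℛ (K ℛ r m), npts r m r' = 1 := by
    intro r' hr'
    simp only [runsOf, Finset.mem_filter] at hr'
    obtain ⟨hr'R, m', hm'⟩ := hr'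
    obtain ⟨_, heq⟩ := hm'
    have heq' : r' m' = r m := heq
    have hset : {k : ℕ | r' k = r m} = {m'} := by
      ext k
      simp only [Set.mem_setOf_eq, Set.mem_singleton_iff]
      constructor
      · intro hk; exact hsync r' hr'R r' hr'R k m' (hk.trans heq'.symm)
      · intro hk; subst hk; exact heq'
    simp [npts, hset]
  refine ⟨?_, hone⟩
  intro p hp
  have hp1 : p.1 ∈ runsOf ℛ (K ℛ r m) := by
    simp only [runsOf, Finset.mem_filter]
    exact ⟨hp.1, p.2, hp⟩
  have hden : ∑ r'' ∈ runsOf ℛ (K ℛ r m), pr r'' * (npts r m r'' : ℝ)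
      = PrS pr (runsOf ℛ (K ℛ r m)) := by
    unfold PrS
    refine Finset.sum_congr rfl fun x hx => ?_
    rw [hone x hx]; simp
  rw [elga, if_pos hp, hden, hone p.1 hp1]
  simp

end SBP
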